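/- Fix d ≥ 1, a nonzero vector μ ∈ ℝ^d, σ > 0, and p ∈ (1/2, 1). Let f(·; m, σ²I) denote the N(m, σ²I) density and let X be distributed as N(μ, σ²I). Then Pr[f(X; μ, σ²I) < p·f(X; −μ, σ²I) or f(X; μ, σ²I) < (1−p)·f(X; 3μ, σ²I)] ≤ Φ(−‖μ‖/σ + σ·ln p/(2‖μ‖)) + Φ(−‖μ‖/σ + σ·ln(1−p)/(2‖μ‖)). -/

import Mathlib

open MeasureTheory Real Set ProbabilityTheory
open scoped ENNReal RealInnerProductSpace

/-- The standard normal cumulative distribution function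
`Φ(z) = ∫_{−∞}^z (1/√(2π)) e^{−u²/2} du`. -/
noncomputable def stdNormCDF (z : ℝ) : ℝ :=
  ∫ u in Set.Iic z, (1 / Real.sqrt (2 * Real.pi)) * Real.exp (-u ^ 2 / 2)
/-- Density of the `d`-dimensional Gaussian `N(m, σ²I)`:
`f(x; m, σ²I) = (2πσ²)^{−d/2} exp(−‖x−m‖²/(2σ²))`. -/
noncomputable def gaussPdf (d : ℕ) (m : EuclideanSpace ℝ (Fin d)) (σ : ℝ)
    (x : EuclideanSpace ℝ (Fin d)) : ℝ :=
  (2 * Real.pi * σ ^ 2) ^ (-(d : ℝ) / 2) * Real.exp (-‖x - m‖ ^ 2 / (2 * σ ^ 2))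

/-- The `d`-dimensional Gaussian measure `N(m, σ²I)` on `ℝ^d`. -/
noncomputable def gauss (d : ℕ) (m : EuclideanSpace ℝ (Fin d)) (σ : ℝ) :
    Measure (EuclideanSpace ℝ (Fin d)) :=
  volume.withDensity fun x => ENNReal.ofReal (gaussPdf d m σ x)

/-- centered 1-d gaussian pdf -/
noncomputable def g1 (σ t : ℝ) : ℝ :=
  (2 * Real.pi * σ ^ 2) ^ (-(1:ℝ) / 2) * Real.exp (-t ^ 2 / (2 * σ ^ 2))

lemma exp_form (σ : ℝ) (hσ : 0 < σ) (t : ℝ) :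
    Real.exp (-t ^ 2 / (2 * σ ^ 2)) = Real.exp (-(1/(2*σ^2)) * t ^ 2) := by
  congr 1; field_simp

lemma g1_integrable {σ : ℝ} (hσ : 0 < σ) : Integrable (g1 σ) := by
  have h : (0:ℝ) < 1/(2*σ^2) := by positivity
  have := (integrable_exp_neg_mul_sq h).const_mul ((2 * Real.pi * σ ^ 2) ^ (-(1:ℝ) / 2))
  refine this.congr (Filter.Eventually.of_forall fun t => ?_)
  rw [g1, exp_form σ hσ]

lemma g1_shift_integrable {σ : ℝ} (hσ : 0 < σ) (m : ℝ) :
    Integrable (fun t => g1 σ (t - m)) :=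
  (g1_integrable hσ).comp_sub_right m

lemma const_cancel {σ : ℝ} (hσ : 0 < σ) :
    (2 * Real.pi * σ ^ 2) ^ (-(1:ℝ) / 2) * Real.sqrt (2 * Real.pi * σ ^ 2) = 1 := by
  have h : (0:ℝ) < 2 * Real.pi * σ ^ 2 := by positivity
  rw [Real.sqrt_eq_rpow, ← Real.rpow_add h]
  norm_num

lemma g1_integral {σ : ℝ} (hσ : 0 < σ) : ∫ t, g1 σ t = 1 := by
  have h : (0:ℝ) < 1/(2*σ^2) := by positivity
  simp_rw [g1, exp_form σ hσ]
  rw [MeasureTheory.integral_const_mul, integral_gaussian]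
  have : Real.pi / (1/(2*σ^2)) = 2 * Real.pi * σ ^ 2 := by field_simp
  rw [this, const_cancel hσ]

lemma g1_shift_integral {σ : ℝ} (hσ : 0 < σ) (m : ℝ) : ∫ t, g1 σ (t - m) = 1 := by
  rw [integral_sub_right_eq_self (g1 σ) m, g1_integral hσ]

lemma sigma_cancel {σ : ℝ} (hσ : 0 < σ) :
    σ * (2 * Real.pi * σ ^ 2) ^ (-(1:ℝ) / 2) = 1 / Real.sqrt (2 * Real.pi) := by
  have h1 : Real.sqrt (2 * Real.pi * σ ^ 2) = Real.sqrt (2 * Real.pi) * σ := by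
    rw [Real.sqrt_mul (by positivity), Real.sqrt_sq hσ.le]
  have h2 := const_cancel hσ
  rw [h1] at h2
  have h3 : (0:ℝ) < Real.sqrt (2 * Real.pi) := Real.sqrt_pos.2 (by positivity)
  field_simp at h2 ⊢
  nlinarith [h2]

lemma g1_Iio {σ : ℝ} (hσ : 0 < σ) (n w : ℝ) :
    ∫ t in Iio w, g1 σ (t - n) = stdNormCDF ((w - n)/σ) := by
  set z := (w - n)/σ with hz
  have himg : (fun u => σ * u + n) '' Iio z = Iio w := by
    ext t
    simp only [mem_image, mem_Iio]
    constructor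
    · rintro ⟨u, hu, rfl⟩
      have : σ * u < σ * z := by exact (mul_lt_mul_iff_right₀ hσ).2 hu
      rw [hz] at this
      have : σ * u < w - n := by rwa [mul_div_cancel₀ _ hσ.ne'] at this
      linarith
    · intro ht
      refine ⟨(t - n)/σ, ?_, by field_simp; ring⟩
      rw [hz, div_lt_div_iff_of_pos_right hσ]
      linarith
  have hderiv : ∀ u ∈ Iio z, HasDerivWithinAt (fun u => σ * u + n) σ (Iio z) u := by
    intro u _
    simpa using (((hasDerivAt_id u).const_mul σ).add_const n).hasDerivWithinAt
  have hinj : InjOn (fun u => σ * u + n) (Iio z) := by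
    intro u _ v _ h
    simp only at h
    have := mul_left_cancel₀ hσ.ne' (by linarith : σ * u = σ * v)
    exact this
  rw [← himg,
    integral_image_eq_integral_abs_deriv_smul measurableSet_Iio hderiv hinj
      (fun t => g1 σ (t - n))]
  rw [stdNormCDF, integral_Iic_eq_integral_Iio]
  refine setIntegral_congr_fun measurableSet_Iio fun u _ => ?_
  have : σ * u + n - n = σ * u := by ring
  rw [this, abs_of_pos hσ, smul_eq_mul, g1, ← mul_assoc, sigma_cancel hσ]
  congr 2
  field_simp

lemma g1_Ioi {σ : ℝ} (hσ : 0 < σ) (n w : ℝ) :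
    ∫ t in Ioi w, g1 σ (t - n) = stdNormCDF ((n - w)/σ) := by
  set z := (n - w)/σ with hz
  have himg : (fun u => -σ * u + n) '' Iio z = Ioi w := by
    ext t
    simp only [mem_image, mem_Iio, mem_Ioi]
    constructor
    · rintro ⟨u, hu, rfl⟩
      have h1 : σ * u < σ * z := (mul_lt_mul_iff_right₀ hσ).2 hu
      rw [hz, mul_div_cancel₀ _ hσ.ne'] at h1
      nlinarith
    · intro ht
      refine ⟨(n - t)/σ, ?_, by field_simp; ring⟩
      rw [hz, div_lt_div_iff_of_pos_right hσ]
      linarith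
  have hderiv : ∀ u ∈ Iio z, HasDerivWithinAt (fun u => -σ * u + n) (-σ) (Iio z) u := by
    intro u _
    simpa using (((hasDerivAt_id u).const_mul (-σ)).add_const n).hasDerivWithinAt
  have hinj : InjOn (fun u => -σ * u + n) (Iio z) := by
    intro u _ v _ h
    simp only at h
    have h2 : -σ * u = -σ * v := by linarith
    exact mul_left_cancel₀ (by linarith : (-σ:ℝ) ≠ 0) h2
  rw [← himg,
    integral_image_eq_integral_abs_deriv_smul measurableSet_Iio hderiv hinj
      (fun t => g1 σ (t - n))]
  rw [stdNormCDF, integral_Iic_eq_integral_Iio]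
  refine setIntegral_congr_fun measurableSet_Iio fun u _ => ?_
  have h4 : -σ * u + n - n = -σ * u := by ring
  rw [h4, abs_neg, abs_of_pos hσ, smul_eq_mul, g1, ← mul_assoc, sigma_cancel hσ]
  congr 2
  field_simp

lemma gauss_halfspace (d : ℕ) (hd : 1 ≤ d) (μv : EuclideanSpace ℝ (Fin d)) (hμ : μv ≠ 0)
    (σ : ℝ) (hσ : 0 < σ) (ε c : ℝ) (hε : ε = 1 ∨ ε = -1) :
    gauss d μv σ {x | ε * ⟪x, μv⟫ < c} =
      ENNReal.ofReal (stdNormCDF ((c / ‖μv‖ - ε * ‖μv‖) / σ)) := by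
  set n : ℝ := ‖μv‖ with hn_def
  have hn : 0 < n := norm_pos_iff.2 hμ
  set i0 : Fin d := ⟨0, hd⟩ with hi0_def
  set e : EuclideanSpace ℝ (Fin d) := n⁻¹ • μv with he_def
  have he : ‖e‖ = 1 := by
    rw [he_def, norm_smul, norm_inv, Real.norm_eq_abs, abs_of_pos hn, ← hn_def,
      inv_mul_cancel₀ hn.ne']
  -- orthonormal basis with b i0 = e
  have horth : Orthonormal ℝ (({i0} : Set (Fin d)).restrict (fun _ : Fin d => e)) := by
    constructor
    · intro i; exact he
    · intro i j hij
      exact absurd (Subsingleton.elim i j) hij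
  obtain ⟨b, hb⟩ := horth.exists_orthonormalBasis_extension_of_card_eq
    (by simp [finrank_euclideanSpace_fin]) 
  have hbi0 : b i0 = e := hb i0 rfl
  have hμe : μv = n • b i0 := by
    rw [hbi0, he_def, smul_smul, mul_inv_cancel₀ hn.ne', one_smul]
  have hrepr : b.repr μv = n • EuclideanSpace.single i0 (1:ℝ) := by
    rw [hμe, _root_.map_smul, b.repr_self]
  -- transfer map
  set T : (Fin d → ℝ) → EuclideanSpace ℝ (Fin d) :=
    fun z => b.repr.symm ((MeasurableEquiv.toLp 2 (Fin d → ℝ)) z) with hT_def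
  have hTmp : MeasurePreserving T volume volume :=
    (b.measurePreserving_repr_symm).comp
      (EuclideanSpace.volume_preserving_symm_measurableEquiv_toLp (Fin d)).symm
  have hTemb : MeasurableEmbedding T :=
    (b.measurableEquiv.symm.measurableEmbedding).comp
      ((MeasurableEquiv.toLp 2 (Fin d → ℝ)).measurableEmbedding)
  set m : Fin d → ℝ := fun j => if j = i0 then n else 0 with hm_def
  have hreprm : ∀ j, (b.repr μv) j = m j := by
    intro j
    rw [hrepr, hm_def]
    by_cases hj : j = i0 <;> simp [hj, EuclideanSpace.single_apply]
  have hrz : ∀ z : Fin d → ℝ, ∀ j, (b.repr (T z)) j = z j := by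
    intro z j
    rw [hT_def]
    simp only [LinearIsometryEquiv.apply_symm_apply]
    rfl
  have hinner : ∀ z : Fin d → ℝ, ⟪T z, μv⟫ = n * z i0 := by
    intro z
    rw [← b.repr.inner_map_map (T z) μv, hrepr]
    rw [real_inner_smul_right, EuclideanSpace.inner_single_right]
    simp [hrz z i0]
  have hdist : ∀ z : Fin d → ℝ, ‖T z - μv‖ ^ 2 = ∑ j, (z j - m j) ^ 2 := by
    intro z
    rw [← b.repr.norm_map (T z - μv), map_sub]
    rw [EuclideanSpace.norm_eq, Real.sq_sqrt (by positivity)]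
    refine Finset.sum_congr rfl fun j _ => ?_
    rw [Real.norm_eq_abs, sq_abs]
    congr 1
    show (b.repr (T z)) j - (b.repr μv) j = z j - m j
    rw [hrz z j, hreprm j]
  have hC : ((2 * Real.pi * σ ^ 2) ^ (-(1:ℝ) / 2)) ^ (d : ℕ)
      = (2 * Real.pi * σ ^ 2) ^ (-(d : ℝ) / 2) := by
    have h2 : (0:ℝ) < 2 * Real.pi * σ ^ 2 := by positivity
    rw [← Real.rpow_natCast ((2 * Real.pi * σ ^ 2) ^ (-(1:ℝ) / 2)) d,
      ← Real.rpow_mul h2.le]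
    congr 1
    ring
  have hpdf : ∀ z : Fin d → ℝ, gaussPdf d μv σ (T z) = ∏ j, g1 σ (z j - m j) := by
    intro z
    rw [gaussPdf, hdist z]
    simp_rw [g1]
    rw [Finset.prod_mul_distrib, Finset.prod_const, Finset.card_univ, Fintype.card_fin, hC]
    congr 1
    rw [← Real.exp_sum]
    congr 1
    rw [← Finset.sum_div, ← Finset.sum_neg_distrib]
  -- the event set
  have hS : MeasurableSet {x : EuclideanSpace ℝ (Fin d) | ε * ⟪x, μv⟫ < c} :=
    (isOpen_lt (continuous_const.mul (continuous_id.inner continuous_const))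
      continuous_const).measurableSet
  have hmem : ∀ z : Fin d → ℝ,
      T z ∈ {x : EuclideanSpace ℝ (Fin d) | ε * ⟪x, μv⟫ < c} ↔ ε * (n * z i0) < c := by
    intro z
    simp only [mem_setOf_eq, hinner z]
  set U : Set ℝ := {t | ε * (n * t) < c} with hU_def
  have hUmeas : MeasurableSet U :=
    (isOpen_lt (continuous_const.mul (continuous_const.mul continuous_id))
      continuous_const).measurableSet
  set F : Fin d → ℝ → ℝ :=
    fun j t => if j = i0 then Set.indicator U (fun s => g1 σ (s - n)) t else g1 σ t with hF_def
  have hpoint : ∀ z : Fin d → ℝ,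
      Set.indicator {x : EuclideanSpace ℝ (Fin d) | ε * ⟪x, μv⟫ < c}
        (gaussPdf d μv σ) (T z) = ∏ j, F j (z j) := by
    intro z
    by_cases h : z i0 ∈ U
    · rw [Set.indicator_of_mem ((hmem z).2 h), hpdf z]
      refine Finset.prod_congr rfl fun j _ => ?_
      by_cases hj : j = i0
      · subst hj
        simp [hF_def, Set.indicator_of_mem h, hm_def]
      · simp [hF_def, hj, hm_def]
    · rw [Set.indicator_of_notMem (fun hx => h ((hmem z).1 hx))]
      symm
      apply Finset.prod_eq_zero (Finset.mem_univ i0)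
      simp [hF_def, Set.indicator_of_notMem h]
  -- integrability
  have hintprod : Integrable (fun z : Fin d → ℝ => ∏ j, g1 σ (z j - m j)) volume :=
    Integrable.fintype_prod (f := fun j t => g1 σ (t - m j))
      (fun j => g1_shift_integrable hσ (m j))
  have hint : Integrable (gaussPdf d μv σ) volume := by
    rw [← hTmp.integrable_comp_emb hTemb]
    exact hintprod.congr (Filter.Eventually.of_forall fun z => (hpdf z).symm)
  have hpos : ∀ x, 0 ≤ gaussPdf d μv σ x := by
    intro x
    rw [gaussPdf]
    positivity
  -- measure as integral
  have step1 : gauss d μv σ {x : EuclideanSpace ℝ (Fin d) | ε * ⟪x, μv⟫ < c}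
      = ENNReal.ofReal (∫ x in {x : EuclideanSpace ℝ (Fin d) | ε * ⟪x, μv⟫ < c},
          gaussPdf d μv σ x) := by
    rw [gauss, withDensity_apply _ hS,
      ← ofReal_integral_eq_lintegral_ofReal hint.integrableOn
        (Filter.Eventually.of_forall hpos)]
  rw [step1]
  congr 1
  rw [← integral_indicator hS,
    ← hTmp.integral_comp hTemb
      (Set.indicator {x : EuclideanSpace ℝ (Fin d) | ε * ⟪x, μv⟫ < c} (gaussPdf d μv σ))]
  calc ∫ z : Fin d → ℝ, Set.indicator _ (gaussPdf d μv σ) (T z)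
      = ∫ z : Fin d → ℝ, ∏ j, F j (z j) := by
        exact integral_congr_ae (Filter.Eventually.of_forall hpoint)
    _ = ∏ j, ∫ t, F j t := MeasureTheory.integral_fintype_prod_eq_prod F
    _ = ∫ t, F i0 t := by
        refine Finset.prod_eq_single_of_mem i0 (Finset.mem_univ _) fun j _ hj => ?_
        simp only [hF_def, if_neg hj]
        simpa using g1_shift_integral hσ 0
    _ = ∫ t in U, g1 σ (t - n) := by
        simp only [hF_def, if_pos rfl]
        exact integral_indicator hUmeas
    _ = stdNormCDF ((c / n - ε * n) / σ) := by
        rcases hε with hε | hε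
        · subst hε
          have hU' : U = Iio (c / n) := by
            ext t
            simp only [hU_def, mem_setOf_eq, mem_Iio, one_mul]
            rw [lt_div_iff₀ hn, mul_comm]
          rw [hU', g1_Iio hσ, one_mul]
        · subst hε
          have hU' : U = Ioi (-(c / n)) := by
            ext t
            simp only [hU_def, mem_setOf_eq, mem_Ioi]
            constructor
            · intro h
              rw [neg_lt, lt_div_iff₀ hn]
              nlinarith
            · intro h
              rw [neg_lt, lt_div_iff₀ hn] at h
              nlinarith
          rw [hU', g1_Ioi hσ]
          congr 1
          ring

lemma pdf_lt_iff (C p A B : ℝ) (hC : 0 < C) (hp : 0 < p) :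
    C * Real.exp A < p * (C * Real.exp B) ↔ A < Real.log p + B := by
  rw [show p * (C * Real.exp B) = C * (p * Real.exp B) by ring, mul_lt_mul_iff_right₀ hC,
    show p * Real.exp B = Real.exp (Real.log p + B) by rw [Real.exp_add, Real.exp_log hp],
    Real.exp_lt_exp]

lemma div_ineq_iff {s : ℝ} (hs : 0 < s) (L A B : ℝ) :
    -A/s < L + -B/s ↔ B - A < L * s := by
  have key : -A/s - -B/s = (B - A)/s := by ring
  rw [← sub_lt_iff_lt_add, key, div_lt_iff₀ hs]

lemma stdNormCDF_nonneg (z : ℝ) : 0 ≤ stdNormCDF z :=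
  integral_nonneg fun u => by positivity

/-- For `X ∼ N(μ, σ²I)`, the probability that the MDA classifier assigns label
`−1` to `X` is at most `Φ(−‖μ‖/σ + σ ln p/(2‖μ‖)) + Φ(−‖μ‖/σ + σ ln(1−p)/(2‖μ‖))`. -/
theorem mda_err_pos (d : ℕ) (hd : 1 ≤ d) (μv : EuclideanSpace ℝ (Fin d)) (hμ : μv ≠ 0)
    (σ p : ℝ) (hσ : 0 < σ) (hp1 : 1 / 2 < p) (hp2 : p < 1) :
    ((gauss d μv σ) {x | gaussPdf d μv σ x < p * gaussPdf d (-μv) σ x ∨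
        gaussPdf d μv σ x < (1 - p) * gaussPdf d ((3 : ℝ) • μv) σ x}).toReal ≤
      stdNormCDF (-‖μv‖ / σ + σ * Real.log p / (2 * ‖μv‖))
        + stdNormCDF (-‖μv‖ / σ + σ * Real.log (1 - p) / (2 * ‖μv‖)) := by
  have hn : 0 < ‖μv‖ := norm_pos_iff.2 hμ
  have hp0 : 0 < p := by linarith
  have hq0 : 0 < 1 - p := by linarith
  have hC : (0:ℝ) < (2 * Real.pi * σ ^ 2) ^ (-(d:ℝ)/2) :=
    Real.rpow_pos_of_pos (by positivity) _
  have hs : (0:ℝ) < 2*σ^2 := by positivity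
  have hset : {x : EuclideanSpace ℝ (Fin d) | gaussPdf d μv σ x < p * gaussPdf d (-μv) σ x ∨
      gaussPdf d μv σ x < (1 - p) * gaussPdf d ((3:ℝ) • μv) σ x}
      = {x : EuclideanSpace ℝ (Fin d) | (1:ℝ) * ⟪x, μv⟫ < σ^2 * Real.log p / 2}
        ∪ {x : EuclideanSpace ℝ (Fin d) |
            (-1:ℝ) * ⟪x, μv⟫ < σ^2 * Real.log (1-p) / 2 - 2*‖μv‖^2} := by
    ext x
    have hxm : ‖x - μv‖^2 = ‖x‖^2 - 2*⟪x,μv⟫ + ‖μv‖^2 := by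
      rw [@norm_sub_sq_real]
    have hxp : ‖x - -μv‖^2 = ‖x‖^2 + 2*⟪x,μv⟫ + ‖μv‖^2 := by
      rw [sub_neg_eq_add, @norm_add_sq_real]
    have hx3 : ‖x - (3:ℝ)•μv‖^2 = ‖x‖^2 - 6*⟪x,μv⟫ + 9*‖μv‖^2 := by
      rw [@norm_sub_sq_real, real_inner_smul_right, norm_smul]
      simp only [Real.norm_eq_abs]
      rw [abs_of_pos (by norm_num : (0:ℝ) < 3)]
      ring
    simp only [mem_setOf_eq, mem_union]
    apply or_congr
    · rw [gaussPdf, gaussPdf, pdf_lt_iff _ _ _ _ hC hp0, div_ineq_iff hs, hxp, hxm]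
      constructor <;> intro h <;> nlinarith [h]
    · rw [gaussPdf, gaussPdf, pdf_lt_iff _ _ _ _ hC hq0, div_ineq_iff hs, hx3, hxm]
      constructor <;> intro h <;> nlinarith [h]
  rw [hset]
  have h1 := gauss_halfspace d hd μv hμ σ hσ 1 (σ^2 * Real.log p / 2) (Or.inl rfl)
  have h2 := gauss_halfspace d hd μv hμ σ hσ (-1) (σ^2 * Real.log (1-p) / 2 - 2*‖μv‖^2)
    (Or.inr rfl)
  have e1 : (σ^2 * Real.log p / 2 / ‖μv‖ - 1*‖μv‖)/σ
      = -‖μv‖/σ + σ*Real.log p/(2*‖μv‖) := by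
    field_simp
    ring
  have e2 : ((σ^2 * Real.log (1-p) / 2 - 2*‖μv‖^2) / ‖μv‖ - (-1)*‖μv‖)/σ
      = -‖μv‖/σ + σ*Real.log (1-p)/(2*‖μv‖) := by
    field_simp
    ring
  rw [e1] at h1
  rw [e2] at h2
  have hb : gauss d μv σ
        ({x : EuclideanSpace ℝ (Fin d) | (1:ℝ) * ⟪x, μv⟫ < σ^2 * Real.log p / 2}
          ∪ {x : EuclideanSpace ℝ (Fin d) |
              (-1:ℝ) * ⟪x, μv⟫ < σ^2 * Real.log (1-p) / 2 - 2*‖μv‖^2})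
      ≤ ENNReal.ofReal (stdNormCDF (-‖μv‖/σ + σ*Real.log p/(2*‖μv‖)))
        + ENNReal.ofReal (stdNormCDF (-‖μv‖/σ + σ*Real.log (1-p)/(2*‖μv‖))) := by
    rw [← h1, ← h2]
    exact measure_union_le _ _
  calc (gauss d μv σ _).toReal
      ≤ (ENNReal.ofReal (stdNormCDF (-‖μv‖/σ + σ*Real.log p/(2*‖μv‖)))
        + ENNReal.ofReal (stdNormCDF (-‖μv‖/σ + σ*Real.log (1-p)/(2*‖μv‖)))).toReal :=
        ENNReal.toReal_mono (by simp) hb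
    _ = stdNormCDF (-‖μv‖/σ + σ*Real.log p/(2*‖μv‖))
        + stdNormCDF (-‖μv‖/σ + σ*Real.log (1-p)/(2*‖μv‖)) := by
        rw [ENNReal.toReal_add ENNReal.ofReal_ne_top ENNReal.ofReal_ne_top,
          ENNReal.toReal_ofReal (stdNormCDF_nonneg _),
          ENNReal.toReal_ofReal (stdNormCDF_nonneg _)]
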